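/- arXiv:1301.1637 — 7 statements merged into one kernel-verified Lean document; each statement's English description precedes it below -/
import Mathlib

section
/- Let (X, ν) be a probability space, T an ergodic invertible measure-preserving transformation of (X, ν), and J a Markov operator on L²(X, ν). If T̂ ∘ J = J, then J = Θ. -/
open MeasureTheory Filter
open scoped RealInnerProductSpace ENNReal

noncomputable section

variable {X : Type*} [MeasurableSpace X]

/-- The constant function `1` as an element of `L²(X, ν)`. -/
def oneL2 (ν : Measure X) [IsProbabilityMeasure ν] : Lp ℝ 2 ν :=
  Lp.const 2 ν (1 : ℝ)

/-- `J` is a Markov operator on `L²(X, ν)`: it is positivity preserving,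
`J 1 = 1` and `J* 1 = 1`. -/
structure IsMarkov (ν : Measure X) [IsProbabilityMeasure ν]
    (J : Lp ℝ 2 ν →L[ℝ] Lp ℝ 2 ν) : Prop where
  pos : ∀ f : Lp ℝ 2 ν, 0 ≤ f → 0 ≤ J f
  map_one : J (oneL2 ν) = oneL2 ν
  adjoint_map_one : (ContinuousLinearMap.adjoint J) (oneL2 ν) = oneL2 ν

/-- `Θ`, the orthogonal projection of `L²(X, ν)` onto the constants:
`Θ f = (∫ f dν) • 1 = ⟪1, f⟫ • 1`. -/
def Theta (ν : Measure X) [IsProbabilityMeasure ν] : Lp ℝ 2 ν →L[ℝ] Lp ℝ 2 ν :=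
  (innerSL ℝ (oneL2 ν)).smulRight (oneL2 ν)

/-- The Koopman operator `f ↦ f ∘ T` on `L²(X, ν)` of a measure-preserving map `T`. -/
def koopman (ν : Measure X) [IsProbabilityMeasure ν] {T : X → X}
    (hT : MeasurePreserving T ν ν) : Lp ℝ 2 ν →L[ℝ] Lp ℝ 2 ν where
  toFun := Lp.compMeasurePreserving T hT
  map_add' := map_add _
  map_smul' := by
    intro c g
    refine Lp.ext ?_
    have h1 := Lp.coeFn_compMeasurePreserving (μ := ν) (c • g) hT
    have h2 := (Lp.coeFn_smul c g).comp_tendsto hT.quasiMeasurePreserving.tendsto_ae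
    have h3 := Lp.coeFn_smul c (Lp.compMeasurePreserving T hT g)
    have h4 := Lp.coeFn_compMeasurePreserving (μ := ν) g hT
    filter_upwards [h1, h2, h3, h4] with x e1 e2 e3 e4
    simp only [Function.comp_apply, Pi.smul_apply, RingHom.id_apply] at *
    rw [e1, e2, e3, e4]
  cont := (Lp.isometry_compMeasurePreserving hT).continuous

/-- The map `T^i` for `i : ℤ`, where `T` is an invertible (bi-measurable) map. -/
def mpowZ (T : X ≃ᵐ X) : ℤ → X → X
  | Int.ofNat n => (⇑T)^[n]
  | Int.negSucc n => (⇑T.symm)^[n + 1]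

/-- `T` is totally ergodic: all nonzero powers of `T` are ergodic. -/
def TotallyErgodic (ν : Measure X) (T : X ≃ᵐ X) : Prop :=
  ∀ i : ℤ, i ≠ 0 → Ergodic (mpowZ T i) ν

/-- The Koopman operator of the power `T^i`, `i : ℤ`, of an invertible
measure-preserving transformation `T`. -/
def koopmanZ (ν : Measure X) [IsProbabilityMeasure ν] (T : X ≃ᵐ X)
    (hT : MeasurePreserving T ν ν) : ℤ → (Lp ℝ 2 ν →L[ℝ] Lp ℝ 2 ν)
  | Int.ofNat n => (koopman ν hT) ^ n
  | Int.negSucc n => (koopman ν (hT.symm T)) ^ (n + 1)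

/-- If `T` is an ergodic invertible measure-preserving transformation and `J` is a
Markov operator with `T̂ ∘ J = J`, then `J = Θ`. -/
theorem markov_fixed_left_of_ergodic {X : Type*} [MeasurableSpace X]
    (ν : Measure X) [IsProbabilityMeasure ν]
    (T : X ≃ᵐ X) (hT : Ergodic (⇑T) ν)
    (J : Lp ℝ 2 ν →L[ℝ] Lp ℝ 2 ν) (hJ : IsMarkov ν J)
    (h : koopman ν hT.toMeasurePreserving ∘L J = J) : J = Theta ν := by
  ext f
  -- `J f` is a.e. invariant under `T`
  have hfix : koopman ν hT.toMeasurePreserving (J f) = J f := by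
    conv_rhs => rw [← h]
    rfl
  have hinv : (J f : X → ℝ) ∘ T =ᵐ[ν] (J f : X → ℝ) := by
    have h1 := Lp.coeFn_compMeasurePreserving (μ := ν) (J f) hT.toMeasurePreserving
    rw [show Lp.compMeasurePreserving T hT.toMeasurePreserving (J f)
        = koopman ν hT.toMeasurePreserving (J f) from rfl, hfix] at h1
    exact h1.symm
  obtain ⟨c, hc⟩ := hT.ae_eq_const_of_ae_eq_comp_ae (Lp.aestronglyMeasurable (J f)) hinv
  have hJf : J f = c • oneL2 ν := by
    refine Lp.ext ?_
    filter_upwards [hc, Lp.coeFn_smul c (oneL2 ν),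
      (Lp.coeFn_const (p := 2) ν (1 : ℝ))] with x e1 e2 e3
    rw [e1, e2]
    simp [oneL2, e3]
  -- inner products with the constant 1
  have hone : ⟪oneL2 ν, oneL2 ν⟫ = (1 : ℝ) := by
    rw [MeasureTheory.L2.inner_def]
    have : ∫ x, ⟪(oneL2 ν : X → ℝ) x, (oneL2 ν : X → ℝ) x⟫ ∂ν = ∫ _x, (1 : ℝ) ∂ν := by
      refine integral_congr_ae ?_
      filter_upwards [(Lp.coeFn_const (p := 2) ν (1 : ℝ))] with x e
      simp [oneL2, e]
    rw [this]
    simp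
  have hcval : c = ⟪oneL2 ν, f⟫ := by
    have h2 : ⟪oneL2 ν, J f⟫ = ⟪oneL2 ν, f⟫ := by
      rw [← ContinuousLinearMap.adjoint_inner_left, hJ.adjoint_map_one]
    rw [hJf] at h2
    rw [← h2, real_inner_smul_right, hone, mul_one]
  rw [hJf, hcval]
  simp [Theta]
end
end

section
/- Let (X, ν) be a probability space, T an ergodic invertible measure-preserving transformation of (X, ν), and J a Markov operator on L²(X, ν). If J ∘ T̂ = J, then J = Θ. -/
open MeasureTheory Filter
open scoped RealInnerProductSpace ENNReal

noncomputable section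

variable {X : Type*} [MeasurableSpace X]

lemma koopman_one' (ν : Measure X) [IsProbabilityMeasure ν] {T : X → X}
    (hT : MeasurePreserving T ν ν) : koopman ν hT (oneL2 ν) = oneL2 ν := by
  refine Lp.ext ?_
  have h1 := Lp.coeFn_compMeasurePreserving (μ := ν) (oneL2 ν) hT
  have h2 := (Lp.coeFn_const (p := 2) (μ := ν) (1:ℝ)).comp_tendsto
      hT.quasiMeasurePreserving.tendsto_ae
  have h3 := Lp.coeFn_const (p := 2) (μ := ν) (1:ℝ)
  filter_upwards [h1, h2, h3] with x e1 e2 e3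
  show (Lp.compMeasurePreserving T hT (oneL2 ν)) x = (oneL2 ν) x
  simp only [oneL2] at *
  rw [e1]
  rw [show ((Lp.const 2 ν (1:ℝ) : Lp ℝ 2 ν) : X → ℝ) ∘ T
      = fun y => ((Lp.const 2 ν (1:ℝ) : Lp ℝ 2 ν) : X → ℝ) (T y) from rfl] at *
  rw [e2, e3]
  rfl

lemma inner_one_one' (ν : Measure X) [IsProbabilityMeasure ν] :
    ⟪oneL2 ν, oneL2 ν⟫ = 1 := by
  rw [L2.inner_def]
  have h := Lp.coeFn_const (p := 2) (μ := ν) (1:ℝ)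
  rw [integral_congr_ae (g := fun _ => (1:ℝ)) ?_]
  · simp
  · filter_upwards [h] with x hx
    simp only [oneL2, hx, Function.const]
    norm_num

set_option maxHeartbeats 1000000 in
set_option synthInstance.maxHeartbeats 1000000 in
/-- If `T` is an ergodic invertible measure-preserving transformation and `J` is a
Markov operator with `J ∘ T̂ = J`, then `J = Θ`. -/
theorem markov_fixed_right_of_ergodic {X : Type*} [MeasurableSpace X]
    (ν : Measure X) [IsProbabilityMeasure ν]
    (T : X ≃ᵐ X) (hT : Ergodic (⇑T) ν)
    (J : Lp ℝ 2 ν →L[ℝ] Lp ℝ 2 ν) (hJ : IsMarkov ν J)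
    (h : J ∘L koopman ν hT.toMeasurePreserving = J) : J = Theta ν := by
  set K := koopman ν hT.toMeasurePreserving with hK
  have hKnorm : ‖K‖ ≤ 1 := by
    refine ContinuousLinearMap.opNorm_le_bound _ zero_le_one fun g => ?_
    rw [one_mul]
    exact le_of_eq <|
      (Lp.isometry_compMeasurePreserving hT.toMeasurePreserving).norm_map_of_map_zero
        (map_zero _) g
  have hconv := K.tendsto_birkhoffAverage_orthogonalProjection hKnorm
  set P := Submodule.orthogonalProjectionOnto (LinearMap.eqLocus (K : Lp ℝ 2 ν →ₗ[ℝ] Lp ℝ 2 ν) ((1 : Lp ℝ 2 ν →L[ℝ] Lp ℝ 2 ν) : Lp ℝ 2 ν →ₗ[ℝ] Lp ℝ 2 ν)) with hP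
  have hJK : ∀ g, J (K g) = J g := fun g => DFunLike.congr_fun h g
  have hJiter : ∀ n g, J ((⇑K)^[n] g) = J g := by
    intro n
    induction n with
    | zero => intro g; rfl
    | succ n ih => intro g; rw [Function.iterate_succ_apply', hJK, ih]
  have h1mem : oneL2 ν ∈ LinearMap.eqLocus (K : Lp ℝ 2 ν →ₗ[ℝ] Lp ℝ 2 ν) ((1 : Lp ℝ 2 ν →L[ℝ] Lp ℝ 2 ν) : Lp ℝ 2 ν →ₗ[ℝ] Lp ℝ 2 ν) := by
    show K (oneL2 ν) = (1 : Lp ℝ 2 ν →L[ℝ] Lp ℝ 2 ν) (oneL2 ν)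
    rw [ContinuousLinearMap.one_apply, hK, koopman_one']
  refine ContinuousLinearMap.ext fun f => ?_
  have hfix : K ((P f : Lp ℝ 2 ν)) = (P f : Lp ℝ 2 ν) := (P f).2
  have hJavg : ∀ n : ℕ, 1 ≤ n → J (birkhoffAverage ℝ (⇑K) _root_.id n f) = J f := by
    intro n hn
    simp only [birkhoffAverage, birkhoffSum, _root_.id, _root_.map_smul, map_sum]
    rw [Finset.sum_congr rfl fun i _ => hJiter i f]
    rw [Finset.sum_const, Finset.card_range, ← Nat.cast_smul_eq_nsmul ℝ, smul_smul,
      inv_mul_cancel₀ (by positivity : (n:ℝ) ≠ 0), one_smul]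
  have h2 : Tendsto (fun n => J (birkhoffAverage ℝ (⇑K) _root_.id n f)) atTop
      (nhds (J (P f : Lp ℝ 2 ν))) := (J.continuous.tendsto _).comp (hconv f)
  have h3 : J f = J (P f : Lp ℝ 2 ν) := by
    have hEq : (fun n : ℕ => J (birkhoffAverage ℝ (⇑K) _root_.id n f)) =ᶠ[atTop]
        fun _ => J f := eventually_atTop.2 ⟨1, fun n hn => hJavg n hn⟩
    exact (tendsto_nhds_unique (h2.congr' hEq) tendsto_const_nhds).symm
  set g : Lp ℝ 2 ν := (P f : Lp ℝ 2 ν) with hg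
  have hae : (g : X → ℝ) ∘ T =ᵐ[ν] (g : X → ℝ) := by
    have h4 := Lp.coeFn_compMeasurePreserving (μ := ν) g hT.toMeasurePreserving
    rw [show Lp.compMeasurePreserving T hT.toMeasurePreserving g = K g from rfl, hfix] at h4
    exact h4.symm
  obtain ⟨c, hc⟩ := hT.ae_eq_const_of_ae_eq_comp_ae (Lp.aestronglyMeasurable g) hae
  have hgc : g = c • oneL2 ν := by
    refine Lp.ext ?_
    filter_upwards [hc, Lp.coeFn_smul c (oneL2 ν),
      Lp.coeFn_const (p := 2) (μ := ν) (1:ℝ)] with x e1 e2 e3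
    rw [e1, e2]
    show Function.const X c x = c • ((oneL2 ν : X → ℝ) x)
    simp only [oneL2] at e3 ⊢
    rw [e3]
    simp [Function.const]
  have horth := Submodule.starProjection_inner_eq_zero f (oneL2 ν) h1mem
  have hinner : ⟪oneL2 ν, f⟫ = c := by
    rw [Submodule.starProjection_apply, inner_sub_left, sub_eq_zero, ← hP, ← hg] at horth
    have h5 : ⟪oneL2 ν, f⟫ = ⟪oneL2 ν, g⟫ := by
      rw [real_inner_comm, horth, real_inner_comm]
    rw [h5, hgc, real_inner_smul_right, inner_one_one', mul_one]
  have hTh : Theta ν f = c • oneL2 ν := by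
    simp only [Theta, ContinuousLinearMap.smulRight_apply, innerSL_apply_apply, hinner]
  rw [h3, hgc, _root_.map_smul, hJ.map_one, hTh]
end
end

section
/- Let (X, ν) be a probability space and T an invertible measure-preserving transformation of (X, ν). Then T is totally ergodic (i.e., T^i is ergodic for every nonzero integer i) if and only if for every Markov operator J on L²(X, ν) and every integer i > 0, the equality T̂^i ∘ J = J implies J = Θ. -/
open MeasureTheory Filter
open scoped RealInnerProductSpace ENNReal

noncomputable section

variable {X : Type*} [MeasurableSpace X]

variable (ν : Measure X) [IsProbabilityMeasure ν] {T : X → X}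

lemma koopman_coeFn (hT : MeasurePreserving T ν ν) (f : Lp ℝ 2 ν) :
    ⇑(koopman ν hT f) =ᵐ[ν] ⇑f ∘ T :=
  Lp.coeFn_compMeasurePreserving f hT

lemma koopman_pow_coeFn (hT : MeasurePreserving T ν ν) (n : ℕ) (f : Lp ℝ 2 ν) :
    ⇑(((koopman ν hT) ^ n) f) =ᵐ[ν] ⇑f ∘ (T^[n]) := by
  induction n with
  | zero => simp [Function.iterate_zero]
  | succ n ih =>
    have h1 : ((koopman ν hT) ^ (n + 1)) f = koopman ν hT (((koopman ν hT) ^ n) f) := by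
      rw [pow_succ']; rfl
    have h2 := koopman_coeFn ν hT (((koopman ν hT) ^ n) f)
    have h3 := ih.comp_tendsto hT.quasiMeasurePreserving.tendsto_ae
    rw [h1]
    refine h2.trans (h3.trans ?_)
    rw [Function.iterate_succ]
    rfl

lemma koopman_pos (hT : MeasurePreserving T ν ν) (f : Lp ℝ 2 ν) (hf : 0 ≤ f) :
    0 ≤ koopman ν hT f := by
  rw [← Lp.coeFn_nonneg] at hf ⊢
  have h2 := hT.quasiMeasurePreserving.tendsto_ae.eventually hf
  filter_upwards [koopman_coeFn ν hT f, h2] with x e1 e2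
  rw [Pi.zero_apply] at *
  rw [e1]; exact e2

lemma koopman_pow_pos (hT : MeasurePreserving T ν ν) (n : ℕ) (f : Lp ℝ 2 ν) (hf : 0 ≤ f) :
    0 ≤ ((koopman ν hT) ^ n) f := by
  induction n with
  | zero => simpa using hf
  | succ n ih =>
    rw [pow_succ']
    exact koopman_pos ν hT _ ih

lemma koopman_pow_one (hT : MeasurePreserving T ν ν) (n : ℕ) :
    ((koopman ν hT) ^ n) (oneL2 ν) = oneL2 ν := by
  refine Lp.ext ?_
  have h1 := koopman_pow_coeFn ν hT n (oneL2 ν)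
  have h2 := Lp.coeFn_const (μ := ν) 2 (1 : ℝ)
  have h3 := h2.comp_tendsto (hT.iterate n).quasiMeasurePreserving.tendsto_ae
  exact h1.trans (h3.trans h2.symm)


lemma Theta_apply (f : Lp ℝ 2 ν) : Theta ν f = ⟪oneL2 ν, f⟫ • oneL2 ν := rfl

lemma inner_oneL2 (g : Lp ℝ 2 ν) : ⟪oneL2 ν, g⟫ = ∫ x, g x ∂ν := by
  rw [L2.inner_def]
  refine integral_congr_ae ?_
  filter_upwards [Lp.coeFn_const (μ := ν) 2 (1 : ℝ)] with x hx
  simp [oneL2, RCLike.inner_apply, hx]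

lemma inner_oneL2_self : ⟪oneL2 ν, oneL2 ν⟫ = 1 := by
  rw [inner_oneL2, oneL2]
  rw [integral_congr_ae (Lp.coeFn_const (μ := ν) 2 (1 : ℝ))]
  simp

lemma koopman_opNorm (hT : MeasurePreserving T ν ν) (n : ℕ) :
    ‖(koopman ν hT) ^ n‖ ≤ 1 := by
  have hn : ∀ m : ℕ, ∀ g : Lp ℝ 2 ν, ‖((koopman ν hT) ^ m) g‖ = ‖g‖ := by
    intro m
    induction m with
    | zero => simp
    | succ m ih =>
      intro g
      rw [pow_succ']
      exact (Lp.norm_compMeasurePreserving _ hT).trans (ih g)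
  refine ContinuousLinearMap.opNorm_le_bound _ zero_le_one fun g => ?_
  rw [hn n g, one_mul]


lemma lpSmulNonneg (c : ℝ) (hc : 0 ≤ c) (g : Lp ℝ 2 ν) (hg : 0 ≤ g) : 0 ≤ c • g := by
  rw [← Lp.coeFn_nonneg] at hg ⊢
  filter_upwards [Lp.coeFn_smul c g, hg] with x h1 h2
  rw [Pi.zero_apply] at *
  rw [h1, Pi.smul_apply, smul_eq_mul]
  exact mul_nonneg hc h2


set_option synthInstance.maxHeartbeats 1000000 in
set_option maxHeartbeats 1000000 in
/-- `T` is totally ergodic iff for every Markov operator `J` and integer `i > 0`,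
`T̂^i ∘ J = J` implies `J = Θ`. -/
theorem totallyErgodic_iff_markov {X : Type*} [MeasurableSpace X]
    (ν : Measure X) [IsProbabilityMeasure ν]
    (T : X ≃ᵐ X) (hT : MeasurePreserving (⇑T) ν ν) :
    TotallyErgodic ν T ↔
      ∀ J : Lp ℝ 2 ν →L[ℝ] Lp ℝ 2 ν, IsMarkov ν J →
        ∀ i : ℤ, 0 < i → koopmanZ ν T hT i ∘L J = J → J = Theta ν := by
  constructor
  · -- totally ergodic implies the Markov property
    intro hTE J hJ i hi hcomp
    lift i to ℕ using hi.le with n hn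
    have hn0 : 0 < n := by exact_mod_cast hi
    have hU : koopmanZ ν T hT (n : ℤ) = (koopman ν hT) ^ n := rfl
    rw [hU] at hcomp
    have herg : Ergodic ((⇑T)^[n]) ν := by
      have := hTE (n : ℤ) (by exact_mod_cast hn0.ne')
      simpa [mpowZ] using this
    ext f
    have hfix : ((koopman ν hT) ^ n) (J f) = J f := by
      have := ContinuousLinearMap.ext_iff.mp hcomp f
      simpa using this
    have hae : ⇑(J f) ∘ (⇑T)^[n] =ᵐ[ν] ⇑(J f) := by
      have h1 := koopman_pow_coeFn ν hT n (J f)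
      rw [hfix] at h1
      exact h1.symm
    obtain ⟨c, hc⟩ := herg.ae_eq_const_of_ae_eq_comp_ae (Lp.aestronglyMeasurable (J f)) hae
    have hJf : J f = c • oneL2 ν := by
      refine Lp.ext ?_
      filter_upwards [hc, Lp.coeFn_smul c (oneL2 ν),
        Lp.coeFn_const (μ := ν) 2 (1 : ℝ)] with x h1 h2 h3
      rw [h1, h2, Pi.smul_apply]
      rw [show (⇑(oneL2 ν)) x = (1:ℝ) from h3]
      simp [Function.const]
    have h1 : ⟪oneL2 ν, J f⟫ = ⟪oneL2 ν, f⟫ := by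
      rw [← ContinuousLinearMap.adjoint_inner_left J f (oneL2 ν), hJ.adjoint_map_one]
    have h2 : ⟪oneL2 ν, J f⟫ = c := by
      rw [hJf, real_inner_smul_right, inner_oneL2_self, mul_one]
    have hc' : c = ⟪oneL2 ν, f⟫ := by rw [← h2, h1]
    rw [Theta_apply, hJf, hc']
  · -- the Markov property implies total ergodicity
    intro h i hi
    set n := i.natAbs with hndef
    have hn0 : 0 < n := Int.natAbs_pos.mpr hi
    set U : Lp ℝ 2 ν →L[ℝ] Lp ℝ 2 ν := (koopman ν hT) ^ n with hUdef
    set K : Submodule ℝ (Lp ℝ 2 ν) := LinearMap.eqLocus U.toLinearMap (1 : Lp ℝ 2 ν →L[ℝ] Lp ℝ 2 ν).toLinearMap with hKdef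
    haveI hKc : CompleteSpace K := by rw [hKdef]; infer_instance
    set J : Lp ℝ 2 ν →L[ℝ] Lp ℝ 2 ν := K.subtypeL ∘L K.orthogonalProjectionOnto with hJdef
    have memK : ∀ g : Lp ℝ 2 ν, g ∈ K ↔ U g = g := fun g => LinearMap.mem_eqLocus
    have hone : oneL2 ν ∈ K := (memK _).mpr (koopman_pow_one ν hT n)
    have hJmem : ∀ f : Lp ℝ 2 ν, J f ∈ K := by
      intro f
      rw [hJdef]
      exact (K.orthogonalProjectionOnto f).2
    have hJproj : ∀ g ∈ K, J g = g := by
      intro g hg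
      show (K.subtypeL) (K.orthogonalProjectionOnto g) = g
      rw [show K.orthogonalProjectionOnto g = ⟨g, hg⟩ from
        K.orthogonalProjectionOnto_mem_subspace_eq_self (⟨g, hg⟩ : K)]
      rfl
    have hUnorm : ‖U‖ ≤ 1 := koopman_opNorm ν hT n
    have hMarkov : IsMarkov ν J := by
      refine ⟨?_, hJproj _ hone, ?_⟩
      · intro f hf
        have hlim := U.tendsto_birkhoffAverage_orthogonalProjection hUnorm f
        have hpos : ∀ N, 0 ≤ birkhoffAverage ℝ (⇑U) _root_.id N f := by
          intro N
          have hiter : ∀ k : ℕ, 0 ≤ (⇑U)^[k] f := by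
            intro k
            induction k with
            | zero => simpa using hf
            | succ k ih =>
              rw [Function.iterate_succ_apply']
              exact koopman_pow_pos ν hT n _ ih
          have hsum : 0 ≤ birkhoffSum (⇑U) _root_.id N f := by
            refine Finset.sum_nonneg fun k _ => hiter k
          rw [birkhoffAverage]
          exact lpSmulNonneg ν (N : ℝ)⁻¹ (by positivity) _ hsum
        exact ge_of_tendsto' hlim hpos |>.trans_eq rfl
      · rw [show J = K.starProjection from rfl, (isSelfAdjoint_starProjection K).adjoint_eq]
        exact hJproj _ hone
    have hcomp : koopmanZ ν T hT (n : ℤ) ∘L J = J :=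
      ContinuousLinearMap.ext fun f => (memK _).mp (hJmem f)
    have hJΘ : J = Theta ν := h J hMarkov (n : ℤ) (by exact_mod_cast hn0) hcomp
    -- measure preservation of the power
    have hmp : MeasurePreserving (mpowZ T i) ν ν := by
      cases i with
      | ofNat m => exact hT.iterate m
      | negSucc m => exact (hT.symm T).iterate (m + 1)
    refine ⟨hmp, ⟨?_⟩⟩
    intro s hs hsinv
    rw [eventuallyConst_set']
    -- the set is invariant under the forward iterate `T^[n]`
    have hs' : (⇑T)^[n] ⁻¹' s = s := by
      cases i with
      | ofNat m => exact hsinv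
      | negSucc m =>
        have hLI : Function.LeftInverse ((⇑T.symm)^[m + 1]) ((⇑T)^[m + 1]) :=
          Function.LeftInverse.iterate T.symm_apply_apply (m + 1)
        have hnm : n = m + 1 := rfl
        rw [hnm]
        ext y
        have h1 : ∀ x, (⇑T.symm)^[m + 1] x ∈ s ↔ x ∈ s := fun x =>
          Set.ext_iff.mp hsinv x
        simp only [Set.mem_preimage]
        rw [← h1 ((⇑T)^[m + 1] y), hLI y]
    -- the indicator of `s` is a fixed point of `U`
    set χ : Lp ℝ 2 ν := indicatorConstLp 2 hs (measure_ne_top ν s) (1 : ℝ) with hχdef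
    have hmemiff : ∀ x, (⇑T)^[n] x ∈ s ↔ x ∈ s := fun x => Set.ext_iff.mp hs' x
    have hχK : χ ∈ K := by
      rw [memK]
      refine Lp.ext ?_
      have h1 := koopman_pow_coeFn ν hT n χ
      have h2 := (indicatorConstLp_coeFn (p := 2) (hs := hs)
        (hμs := measure_ne_top ν s) (c := (1:ℝ))).comp_tendsto
        (hT.iterate n).quasiMeasurePreserving.tendsto_ae
      have h3 := indicatorConstLp_coeFn (p := 2) (hs := hs)
        (hμs := measure_ne_top ν s) (c := (1:ℝ))
      refine h1.trans (h2.trans ?_) |>.trans h3.symm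
      refine Eventually.of_forall fun x => ?_
      by_cases hx : x ∈ s
      · rw [Function.comp_apply, Set.indicator_of_mem ((hmemiff x).mpr hx),
          Set.indicator_of_mem hx]
      · rw [Function.comp_apply,
          Set.indicator_of_notMem (fun hh => hx ((hmemiff x).mp hh)),
          Set.indicator_of_notMem hx]
    have hχ : χ = ⟪oneL2 ν, χ⟫ • oneL2 ν := by
      conv_lhs => rw [← hJproj χ hχK]
      rw [hJΘ, Theta_apply]
    set c : ℝ := ⟪oneL2 ν, χ⟫ with hcdef
    have hae : ∀ᵐ x ∂ν, s.indicator (fun _ => (1:ℝ)) x = c := by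
      have h3 := indicatorConstLp_coeFn (p := 2) (hs := hs)
        (hμs := measure_ne_top ν s) (c := (1:ℝ))
      filter_upwards [h3, Lp.coeFn_smul c (oneL2 ν),
        Lp.coeFn_const (μ := ν) 2 (1 : ℝ)] with x e1 e2 e3
      have := congrArg (fun g : Lp ℝ 2 ν => (g : X → ℝ) x) hχ
      rw [e1, e2] at this
      simp only [Pi.smul_apply, smul_eq_mul, oneL2] at this
      rw [show (⇑(Lp.const 2 ν (1:ℝ))) x = (1:ℝ) from e3] at this
      rw [this, mul_one]
    by_cases hνs : ν s = 0
    · exact Or.inl (ae_eq_empty.mpr hνs)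

    · right
      have hres : ν.restrict s ≠ 0 := by
        simpa [Measure.restrict_eq_zero] using hνs
      haveI : (ae (ν.restrict s)).NeBot := ae_neBot.mpr hres
      have h1 : ∀ᵐ x ∂ν.restrict s, x ∈ s := ae_restrict_mem hs
      have h2 : ∀ᵐ x ∂ν.restrict s, s.indicator (fun _ => (1:ℝ)) x = c :=
        ae_restrict_of_ae hae
      obtain ⟨x, hxs, hxc⟩ := (h1.and h2).exists
      have hc1 : c = 1 := by rw [← hxc, Set.indicator_of_mem hxs]
      have : ∀ᵐ x ∂ν, x ∈ s := by
        filter_upwards [hae] with x hx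
        by_contra hxn
        rw [Set.indicator_of_notMem hxn, hc1] at hx
        exact one_ne_zero hx.symm
      exact Filter.eventuallyEq_univ.mpr this
end
end

section
/- Let (X, ν) be a probability space, let S and T be invertible measure-preserving transformations of (X, ν) with T totally ergodic, let p, q be positive integers, and let i, j be integers. Let J be a Markov operator on L²(X, ν) with J ≠ Θ such that Ŝ^q ∘ J = J ∘ T̂^p and Ŝ^i ∘ J = J ∘ T̂^j. Then j·q = i·p. -/
open MeasureTheory Filter
open scoped RealInnerProductSpace ENNReal

noncomputable section

variable {X : Type*} [MeasurableSpace X]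

-- auxiliary lemmas
section Aux

variable {X : Type*} [MeasurableSpace X] (ν : Measure X) [IsProbabilityMeasure ν]

lemma koopman_apply_ae {R : X → X} (h : MeasurePreserving R ν ν) (f : Lp ℝ 2 ν) :
    ⇑(koopman ν h f) =ᵐ[ν] ⇑f ∘ R :=
  Lp.coeFn_compMeasurePreserving f h

lemma koopman_congr {R1 R2 : X → X} (hR : R1 = R2) (h1 : MeasurePreserving R1 ν ν)
    (h2 : MeasurePreserving R2 ν ν) : koopman ν h1 = koopman ν h2 := by
  subst hR; rfl

lemma koopman_comp {R1 R2 : X → X} (h1 : MeasurePreserving R1 ν ν)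
    (h2 : MeasurePreserving R2 ν ν) :
    koopman ν h1 ∘L koopman ν h2 = koopman ν (h2.comp h1) := by
  refine ContinuousLinearMap.ext fun f => ?_
  refine Lp.ext ?_
  have e1 := koopman_apply_ae ν h1 (koopman ν h2 f)
  have e2 := (koopman_apply_ae ν h2 f).comp_tendsto h1.quasiMeasurePreserving.tendsto_ae
  have e3 := koopman_apply_ae ν (h2.comp h1) f
  show ⇑(koopman ν h1 (koopman ν h2 f)) =ᵐ[ν] ⇑(koopman ν (h2.comp h1) f)
  filter_upwards [e1, e2, e3] with x g1 g2 g3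
  simp only [Function.comp_apply] at *
  rw [g1, g2, g3]

lemma koopman_pow {R : X → X} (h : MeasurePreserving R ν ν) (n : ℕ) :
    (koopman ν h) ^ n = koopman ν (h.iterate n) := by
  induction n with
  | zero =>
    rw [pow_zero]
    ext f

    show ⇑f =ᵐ[ν] ⇑(koopman ν (h.iterate 0) f)
    filter_upwards [koopman_apply_ae ν (h.iterate 0) f] with x hx
    rw [hx]
    simp [Function.iterate_zero]
  | succ n ih =>
    rw [pow_succ, ContinuousLinearMap.mul_def, ih, koopman_comp]
    exact koopman_congr ν (Function.iterate_succ' R n).symm _ _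

lemma mpowZ_mp (T : X ≃ᵐ X) (hT : MeasurePreserving (⇑T) ν ν) :
    ∀ n : ℤ, MeasurePreserving (mpowZ T n) ν ν
  | Int.ofNat n => hT.iterate n
  | Int.negSucc n => (hT.symm T).iterate (n + 1)

lemma koopmanZ_eq (T : X ≃ᵐ X) (hT : MeasurePreserving (⇑T) ν ν) (n : ℤ) :
    koopmanZ ν T hT n = koopman ν (mpowZ_mp ν T hT n) := by
  cases n with
  | ofNat n => exact koopman_pow ν hT n
  | negSucc n => exact koopman_pow ν (hT.symm T) (n + 1)

lemma mpowZ_eq_perm (T : X ≃ᵐ X) (n : ℤ) : mpowZ T n = ⇑(T.toEquiv ^ n) := by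
  cases n with
  | ofNat n =>
    show (⇑T)^[n] = ⇑(T.toEquiv ^ (Int.ofNat n))
    rw [Int.ofNat_eq_coe, zpow_natCast]
    exact Equiv.Perm.iterate_eq_pow T.toEquiv n
  | negSucc n =>
    show (⇑T.symm)^[n + 1] = ⇑(T.toEquiv ^ (Int.negSucc n))
    rw [zpow_negSucc, ← inv_pow]
    exact Equiv.Perm.iterate_eq_pow T.toEquiv⁻¹ (n + 1)

lemma mpowZ_comp (T : X ≃ᵐ X) (a b : ℤ) :
    mpowZ T a ∘ mpowZ T b = mpowZ T (a + b) := by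
  rw [mpowZ_eq_perm, mpowZ_eq_perm, mpowZ_eq_perm, ← Equiv.Perm.coe_mul, ← zpow_add]

lemma koopmanZ_comp (T : X ≃ᵐ X) (hT : MeasurePreserving (⇑T) ν ν) (a b : ℤ) :
    koopmanZ ν T hT a ∘L koopmanZ ν T hT b = koopmanZ ν T hT (a + b) := by
  rw [koopmanZ_eq, koopmanZ_eq, koopmanZ_eq, koopman_comp]
  exact koopman_congr ν ((mpowZ_comp T b a).trans (by rw [add_comm])) _ _

lemma koopmanZ_zero (T : X ≃ᵐ X) (hT : MeasurePreserving (⇑T) ν ν) :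
    koopmanZ ν T hT 0 = 1 :=
  pow_zero (koopman ν hT)

lemma oneL2_coeFn : ⇑(oneL2 ν) =ᵐ[ν] fun _ => (1 : ℝ) :=
  Lp.coeFn_const _ _ _

lemma Lp2_ext {f g : Lp ℝ 2 ν} (h : ⇑f =ᵐ[ν] ⇑g) : f = g :=
  Lp.ext h

set_option maxHeartbeats 1000000 in
lemma koopman_invariant_eq_theta {R : X → X} (hR : MeasurePreserving R ν ν)
    (herg : Ergodic R ν) (J : Lp ℝ 2 ν →L[ℝ] Lp ℝ 2 ν)
    (hJone : J (oneL2 ν) = oneL2 ν)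
    (hJU : ∀ x, J (koopman ν hR x) = J x) : J = Theta ν := by
  set U : Lp ℝ 2 ν →L[ℝ] Lp ℝ 2 ν := koopman ν hR with hUk
  have hJiter : ∀ (n : ℕ) (x), J ((⇑U)^[n] x) = J x := by
    intro n
    induction n with
    | zero => intro x; rfl
    | succ n ih => intro x; rw [Function.iterate_succ_apply, ih (U x), hJU x]
  have hUnorm : ‖U‖ ≤ 1 := by
    refine ContinuousLinearMap.opNorm_le_bound U zero_le_one fun f => ?_
    rw [one_mul]
    show ‖Lp.compMeasurePreserving (R) (hR) f‖ ≤ ‖f‖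
    rw [Lp.norm_compMeasurePreserving]
  -- U one = one
  have hUone : U (oneL2 ν) = oneL2 ν := by
    apply Lp2_ext ν
    have e1 := koopman_apply_ae ν (hR) (oneL2 ν)
    have e2 := (oneL2_coeFn ν).comp_tendsto
      (hR).quasiMeasurePreserving.tendsto_ae
    filter_upwards [e1, e2, oneL2_coeFn ν] with x g1 g2 g3
    rw [g1]
    simp only [Function.comp_apply] at g2 ⊢
    rw [g2, g3]
  -- fixed space of U is the constants
  have hfixed : U.eqLocus (1 : Lp ℝ 2 ν →L[ℝ] Lp ℝ 2 ν)
      = Submodule.span ℝ {oneL2 ν} := by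
    apply le_antisymm
    · intro f hf
      rw [LinearMap.mem_eqLocus] at hf
      have hUf : U f = f := by simpa using hf
      have hae : ⇑f ∘ (R) =ᵐ[ν] ⇑f := by
        have h2 := koopman_apply_ae ν (hR) f
        have h3 : koopman ν (hR) f = f := hUf
        rw [h3] at h2
        exact h2.symm
      obtain ⟨c, hc⟩ := herg.ae_eq_const_of_ae_eq_comp_ae (Lp.aestronglyMeasurable f) hae
      have hfc : f = c • oneL2 ν := by
        apply Lp2_ext ν
        have e2 := Lp.coeFn_smul c (oneL2 ν)
        filter_upwards [hc, e2, oneL2_coeFn ν] with x g1 g2 g3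
        rw [g1, g2, Pi.smul_apply, g3]
        simp
      rw [hfc]
      exact Submodule.smul_mem _ c (Submodule.mem_span_singleton_self _)
    · rw [Submodule.span_le]
      intro f hf
      rw [Set.mem_singleton_iff] at hf
      subst hf
      rw [SetLike.mem_coe, LinearMap.mem_eqLocus]
      simpa using hUone
  -- Theta facts
  have hThetaApp : ∀ x : Lp ℝ 2 ν, Theta ν x = (inner ℝ (oneL2 ν) x : ℝ) • oneL2 ν :=
    fun x => rfl
  have hJTheta : ∀ x : Lp ℝ 2 ν, J (Theta ν x) = Theta ν x := by
    intro x
    calc J (Theta ν x) = J ((inner ℝ (oneL2 ν) x : ℝ) • oneL2 ν) := by rw [hThetaApp]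
      _ = (inner ℝ (oneL2 ν) x : ℝ) • J (oneL2 ν) := ContinuousLinearMap.map_smul J _ _
      _ = (inner ℝ (oneL2 ν) x : ℝ) • oneL2 ν := by rw [hJone]
      _ = Theta ν x := (hThetaApp x).symm
  have hinner11 : (inner ℝ (oneL2 ν) (oneL2 ν) : ℝ) = 1 := by
    rw [L2.inner_def]
    have hone : (fun a => (inner ℝ ((oneL2 ν) a) ((oneL2 ν) a) : ℝ)) =ᵐ[ν] fun _ => (1 : ℝ) := by
      filter_upwards [oneL2_coeFn ν] with x hx
      rw [hx]
      simp [real_inner_self_eq_norm_sq]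
    rw [integral_congr_ae hone]
    simp
  -- the main computation: J = Theta
  have hJP : ∀ x : Lp ℝ 2 ν, J x = Theta ν x := by
    intro x
    have tend := U.tendsto_birkhoffAverage_orthogonalProjection (𝕜 := ℝ) hUnorm x
    have hPx : ((Submodule.orthogonalProjection (U.eqLocus (1 : Lp ℝ 2 ν →L[ℝ] Lp ℝ 2 ν)) x : Lp ℝ 2 ν)) = Theta ν x := by
      rw [← Submodule.starProjection_apply]
      apply Submodule.eq_starProjection_of_mem_of_inner_eq_zero
      · rw [hfixed, hThetaApp]
        exact Submodule.smul_mem _ _ (Submodule.mem_span_singleton_self _)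
      · intro w hw
        rw [hfixed, Submodule.mem_span_singleton] at hw
        obtain ⟨c, rfl⟩ := hw
        rw [real_inner_smul_right, inner_sub_left, hThetaApp, real_inner_smul_left, hinner11,
          real_inner_comm x (oneL2 ν)]
        ring
    have t1 : Tendsto (fun N => J (birkhoffAverage ℝ (⇑U) _root_.id N x)) atTop
        (nhds (J ((Submodule.orthogonalProjection (U.eqLocus (1 : Lp ℝ 2 ν →L[ℝ] Lp ℝ 2 ν)) x : Lp ℝ 2 ν)))) :=
      ((J.continuous.tendsto _).comp tend)
    have t2 : ∀ᶠ N in atTop, J (birkhoffAverage ℝ (⇑U) _root_.id N x) = J x := by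
      filter_upwards [eventually_ge_atTop 1] with N hN
      have hN0 : (N : ℝ) ≠ 0 := Nat.cast_ne_zero.mpr (by omega)
      rw [birkhoffAverage, birkhoffSum, ContinuousLinearMap.map_smul, map_sum]
      simp only [id_eq]
      rw [Finset.sum_congr rfl fun m _ => hJiter m x, Finset.sum_const, Finset.card_range,
        ← Nat.cast_smul_eq_nsmul ℝ, smul_smul, inv_mul_cancel₀ hN0, one_smul]
    have t3 : Tendsto (fun N => J (birkhoffAverage ℝ (⇑U) _root_.id N x)) atTop (nhds (J x)) := by
      refine Tendsto.congr' ?_ (tendsto_const_nhds (x := J x))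
      filter_upwards [t2] with N h
      exact h.symm
    have := tendsto_nhds_unique t3 t1
    rw [hPx, hJTheta] at this
    exact this
  exact ContinuousLinearMap.ext hJP

end Aux

/-- If `T` is totally ergodic, `J ≠ Θ` is a Markov operator with `Ŝ^q ∘ J = J ∘ T̂^p`
and `Ŝ^i ∘ J = J ∘ T̂^j`, then `j q = i p`. -/
theorem exponents_proportional {X : Type*} [MeasurableSpace X]
    (ν : Measure X) [IsProbabilityMeasure ν]
    (S T : X ≃ᵐ X) (hS : MeasurePreserving (⇑S) ν ν) (hT : MeasurePreserving (⇑T) ν ν)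
    (hTte : TotallyErgodic ν T)
    (p q : ℕ) (hp : 0 < p) (hq : 0 < q) (i j : ℤ)
    (J : Lp ℝ 2 ν →L[ℝ] Lp ℝ 2 ν) (hJM : IsMarkov ν J) (hJne : J ≠ Theta ν)
    (h1 : ((koopman ν hS) ^ q) ∘L J = J ∘L ((koopman ν hT) ^ p))
    (h2 : koopmanZ ν S hS i ∘L J = J ∘L koopmanZ ν T hT j) :
    j * (q : ℤ) = i * (p : ℤ) := by
  classical
  by_contra hne
  -- pointwise composition laws
  have KTc : ∀ (a b : ℤ) (x : Lp ℝ 2 ν),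
      koopmanZ ν T hT a (koopmanZ ν T hT b x) = koopmanZ ν T hT (a + b) x := by
    intro a b x
    rw [← koopmanZ_comp ν T hT a b]
    rfl
  have KSc : ∀ (a b : ℤ) (x : Lp ℝ 2 ν),
      koopmanZ ν S hS a (koopmanZ ν S hS b x) = koopmanZ ν S hS (a + b) x := by
    intro a b x
    rw [← koopmanZ_comp ν S hS a b]
    rfl
  have KT0 : ∀ x : Lp ℝ 2 ν, koopmanZ ν T hT 0 x = x := by
    intro x; rw [koopmanZ_zero]; rfl
  have KS0 : ∀ x : Lp ℝ 2 ν, koopmanZ ν S hS 0 x = x := by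
    intro x; rw [koopmanZ_zero]; rfl
  have H1 : ∀ x, koopmanZ ν S hS (q : ℤ) (J x) = J (koopmanZ ν T hT (p : ℤ) x) :=
    fun x => DFunLike.congr_fun h1 x
  have H2 : ∀ x, koopmanZ ν S hS i (J x) = J (koopmanZ ν T hT j x) :=
    fun x => DFunLike.congr_fun h2 x
  -- general multiplication of intertwining relations
  have hnat : ∀ (c d : ℤ), (∀ x, koopmanZ ν S hS c (J x) = J (koopmanZ ν T hT d x)) →
      ∀ (n : ℕ) (x), koopmanZ ν S hS (c * n) (J x) = J (koopmanZ ν T hT (d * n) x) := by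
    intro c d h n
    induction n with
    | zero => intro x; simpa using (KS0 (J x)).trans (congrArg J (KT0 x)).symm
    | succ n ih =>
      intro x
      have ec : c * ((n : ℤ) + 1) = c + c * n := by ring
      have ed : d * ((n : ℤ) + 1) = d + d * n := by ring
      push_cast
      rw [ec, ed, ← KSc c (c * n) (J x), ih x, h (koopmanZ ν T hT (d * n) x),
        KTc d (d * n) x]
  have hneg : ∀ (c d : ℤ), (∀ x, koopmanZ ν S hS c (J x) = J (koopmanZ ν T hT d x)) →
      ∀ x, koopmanZ ν S hS (-c) (J x) = J (koopmanZ ν T hT (-d) x) := by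
    intro c d h x
    have e1 : koopmanZ ν T hT d (koopmanZ ν T hT (-d) x) = x := by
      rw [KTc d (-d) x, add_neg_cancel, KT0]
    calc koopmanZ ν S hS (-c) (J x)
        = koopmanZ ν S hS (-c) (J (koopmanZ ν T hT d (koopmanZ ν T hT (-d) x))) := by rw [e1]
      _ = koopmanZ ν S hS (-c) (koopmanZ ν S hS c (J (koopmanZ ν T hT (-d) x))) := by
          rw [h (koopmanZ ν T hT (-d) x)]
      _ = koopmanZ ν S hS 0 (J (koopmanZ ν T hT (-d) x)) := by
          rw [KSc (-c) c, neg_add_cancel]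
      _ = J (koopmanZ ν T hT (-d) x) := KS0 _
  have hint : ∀ (c d : ℤ), (∀ x, koopmanZ ν S hS c (J x) = J (koopmanZ ν T hT d x)) →
      ∀ (m : ℤ) (x), koopmanZ ν S hS (c * m) (J x) = J (koopmanZ ν T hT (d * m) x) := by
    intro c d h m
    cases m with
    | ofNat n => exact hnat c d h n
    | negSucc n =>
      intro x
      have ec : c * Int.negSucc n = -c * ((n + 1 : ℕ) : ℤ) := by
        rw [Int.negSucc_eq]; push_cast; ring
      have ed : d * Int.negSucc n = -d * ((n + 1 : ℕ) : ℤ) := by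
        rw [Int.negSucc_eq]; push_cast; ring
      rw [ec, ed]
      exact hnat (-c) (-d) (hneg c d h) (n + 1) x
  have A := hint (q : ℤ) (p : ℤ) H1 i
  have B := hint i j H2 (q : ℤ)
  have key : ∀ x, J (koopmanZ ν T hT ((p : ℤ) * i) x) = J (koopmanZ ν T hT (j * (q : ℤ)) x) := by
    intro x
    rw [← A x, ← B x, mul_comm (q : ℤ) i]
  set k : ℤ := (p : ℤ) * i - j * (q : ℤ) with hk
  have hk0 : k ≠ 0 := by
    intro h0
    apply hne
    have : (p : ℤ) * i = j * (q : ℤ) := by omega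
    rw [mul_comm i (p : ℤ), ← this]
  have hinv : ∀ x, J (koopmanZ ν T hT k x) = J x := by
    intro x
    have := key (koopmanZ ν T hT (-(j * (q : ℤ))) x)
    rw [KTc ((p : ℤ) * i) (-(j * (q : ℤ))) x, KTc (j * (q : ℤ)) (-(j * (q : ℤ))) x,
      add_neg_cancel, KT0] at this
    have ek : (p : ℤ) * i + -(j * (q : ℤ)) = k := by rw [hk]; ring
    rw [ek] at this
    exact this
  have hJeq : J = Theta ν := by
    refine koopman_invariant_eq_theta ν (mpowZ_mp ν T hT k) (hTte k hk0) J hJM.map_one ?_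
    intro x
    rw [← koopmanZ_eq ν T hT k]
    exact hinv x
  exact hJne hJeq
end
end

section
/- Let d ≥ 2 be a prime number, let C ≥ 0, and let c : ℕ → ℝ satisfy |c(i)| ≤ C for all i and c(i) = 0 whenever d does not divide i. Suppose that for every integer n ≥ 1, Σ_{i=1}^{N} c(d·n·i)·μ(i) = o(N) as N → ∞, where μ is the Möbius function. Then Σ_{i=1}^{N} c(i)·μ(i) = o(N) as N → ∞. -/
open Filter Asymptotics Finset ArithmeticFunction
open scoped ArithmeticFunction.Moebius

lemma moebius_mul_prime' {d : ℕ} (hd : d.Prime) (j : ℕ) :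
    (μ (d * j) : ℤ) = if d ∣ j then 0 else - μ j := by
  split_ifs with hdvd
  · rcases eq_or_ne j 0 with rfl | hj
    · simp
    apply ArithmeticFunction.moebius_eq_zero_of_not_squarefree
    intro hsq
    have hdd : d * d ∣ d * j := mul_dvd_mul_left d hdvd
    exact Irreducible.not_isUnit hd (hsq d hdd)
  · have hcop : Nat.Coprime d j := (Nat.Prime.coprime_iff_not_dvd hd).mpr hdvd
    rw [ArithmeticFunction.isMultiplicative_moebius.map_mul_of_coprime hcop,
        ArithmeticFunction.moebius_apply_prime hd]
    ring

lemma reindex_sum' {d : ℕ} (hd : d.Prime) (N : ℕ) (g : ℕ → ℝ)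
    (hg : ∀ i, ¬ d ∣ i → g i = 0) :
    ∑ i ∈ Finset.Icc 1 N, g i = ∑ j ∈ Finset.Icc 1 (N / d), g (d * j) := by
  have hd0 : 0 < d := hd.pos
  rw [← Finset.sum_filter_of_ne (p := fun i => d ∣ i)
      (fun x _ hx => by by_contra hc; exact hx (hg x hc))]
  refine Finset.sum_nbij' (fun a => a / d) (fun b => d * b) ?_ ?_ ?_ ?_ ?_
  · intro a ha
    simp only [Finset.mem_filter, Finset.mem_Icc] at ha ⊢
    obtain ⟨⟨h1, h2⟩, hdvd⟩ := ha
    exact ⟨(Nat.one_le_div_iff hd0).mpr (Nat.le_of_dvd h1 hdvd), Nat.div_le_div_right h2⟩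
  · intro b hb
    simp only [Finset.mem_filter, Finset.mem_Icc] at hb ⊢
    obtain ⟨h1, h2⟩ := hb
    refine ⟨⟨Nat.one_le_iff_ne_zero.mpr (by positivity), ?_⟩, ⟨b, rfl⟩⟩
    calc d * b = b * d := mul_comm _ _
    _ ≤ N := (Nat.le_div_iff_mul_le hd0).mp h2
  · intro a ha
    simp only [Finset.mem_filter] at ha
    exact Nat.mul_div_cancel' ha.2
  · intro b _
    exact Nat.mul_div_cancel_left b hd0
  · intro a ha
    simp only [Finset.mem_filter] at ha
    rw [Nat.mul_div_cancel' ha.2]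

/-- For a prime `d` and a bounded sequence `c` vanishing off the multiples of `d`,
if `Σ_{i ≤ N} c (d n i) μ i = o(N)` for every `n ≥ 1`, then
`Σ_{i ≤ N} c i μ i = o(N)`. -/
theorem moebius_reduction (d : ℕ) (hd : d.Prime) (C : ℝ) (hC : 0 ≤ C)
    (c : ℕ → ℝ) (hbound : ∀ i, |c i| ≤ C) (hvanish : ∀ i, ¬ d ∣ i → c i = 0)
    (h : ∀ n : ℕ, 1 ≤ n →
      (fun N : ℕ => ∑ i ∈ Finset.Icc 1 N, c (d * n * i) * (ArithmeticFunction.moebius i : ℝ))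
        =o[atTop] (fun N : ℕ => (N : ℝ))) :
    (fun N : ℕ => ∑ i ∈ Finset.Icc 1 N, c i * (ArithmeticFunction.moebius i : ℝ))
      =o[atTop] (fun N : ℕ => (N : ℝ)) := by
  have hd0 : 0 < d := hd.pos
  have hd2 : 2 ≤ d := hd.two_le
  -- cast form of the Möbius identity
  have hmu : ∀ j : ℕ, ((μ (d * j) : ℤ) : ℝ) = if d ∣ j then 0 else -((μ j : ℤ) : ℝ) := by
    intro j
    rw [moebius_mul_prime' hd j]
    split_ifs <;> push_cast <;> ring
  set f : ℕ → ℕ → ℝ := fun k M => ∑ i ∈ Finset.Icc 1 M, c (d ^ k * i) * (μ i : ℝ) with hf_def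
  set G : ℕ → ℕ → ℝ :=
    fun k N => ∑ j ∈ Finset.Icc 1 (N / d ^ k),
      (if d ∣ j then 0 else c (d ^ k * j) * (μ j : ℝ)) with hG_def
  -- base step
  have hbase : ∀ N : ℕ, (∑ i ∈ Finset.Icc 1 N, c i * (μ i : ℝ)) = - G 1 N := by
    intro N
    rw [reindex_sum' hd N (fun i => c i * (μ i : ℝ))
      (fun i hi => by simp [hvanish i hi])]
    rw [hG_def]
    simp only [pow_one]
    rw [← Finset.sum_neg_distrib]
    refine Finset.sum_congr rfl (fun j _ => ?_)
    rw [hmu j]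
    split_ifs <;> ring
  -- recursion step
  have hG : ∀ k N : ℕ, G k N = f k (N / d ^ k) + G (k + 1) N := by
    intro k N
    have hsplit : f k (N / d ^ k) =
        G k N + ∑ j ∈ Finset.Icc 1 (N / d ^ k),
          (if d ∣ j then c (d ^ k * j) * (μ j : ℝ) else 0) := by
      rw [hG_def, hf_def, ← Finset.sum_add_distrib]
      refine Finset.sum_congr rfl (fun j _ => ?_)
      split_ifs <;> ring
    have hsecond : (∑ j ∈ Finset.Icc 1 (N / d ^ k),
          (if d ∣ j then c (d ^ k * j) * (μ j : ℝ) else 0)) = - G (k + 1) N := by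
      rw [reindex_sum' hd (N / d ^ k)
        (fun j => if d ∣ j then c (d ^ k * j) * (μ j : ℝ) else 0)
        (fun i hi => by simp [hi])]
      rw [hG_def]
      have hdiv : N / d ^ k / d = N / d ^ (k + 1) := by
        rw [Nat.div_div_eq_div_mul, ← pow_succ]
      rw [hdiv, ← Finset.sum_neg_distrib]
      refine Finset.sum_congr rfl (fun m _ => ?_)
      have : d ∣ d * m := ⟨m, rfl⟩
      simp only [this, if_true]
      rw [hmu m]
      have harg : d ^ k * (d * m) = d ^ (k + 1) * m := by ring
      rw [harg]
      split_ifs <;> ring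
    rw [eq_sub_iff_add_eq.mpr hsplit.symm] at *
    linarith [hsplit, hsecond]
  -- telescoping
  have key : ∀ K N : ℕ, (∑ i ∈ Finset.Icc 1 N, c i * (μ i : ℝ)) =
      -(∑ k ∈ Finset.Icc 1 K, f k (N / d ^ k)) - G (K + 1) N := by
    intro K N
    induction K with
    | zero => simp [hbase N]
    | succ K ih =>
      rw [ih, Finset.sum_Icc_succ_top (by omega : 1 ≤ K + 1), hG (K + 1) N]
      ring
  -- bound on G
  have hGbound : ∀ k N : ℕ, |G k N| ≤ C * N / d ^ k := by
    intro k N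
    calc |G k N| ≤ ∑ j ∈ Finset.Icc 1 (N / d ^ k),
        |if d ∣ j then (0:ℝ) else c (d ^ k * j) * (μ j : ℝ)| :=
          Finset.abs_sum_le_sum_abs _ _
    _ ≤ ∑ j ∈ Finset.Icc 1 (N / d ^ k), C := by
        refine Finset.sum_le_sum (fun j _ => ?_)
        split_ifs
        · simpa using hC
        · rw [abs_mul]
          calc |c (d ^ k * j)| * |((μ j : ℤ) : ℝ)| ≤ C * 1 := by
                refine mul_le_mul (hbound _) ?_ (abs_nonneg _) hC
                rw [← Int.cast_abs]
                exact_mod_cast ArithmeticFunction.abs_moebius_le_one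
          _ = C := mul_one C
    _ = (N / d ^ k : ℕ) * C := by rw [Finset.sum_const, Nat.card_Icc]; simp [mul_comm]
    _ ≤ ((N : ℝ) / (d : ℝ) ^ k) * C := by
        refine mul_le_mul_of_nonneg_right ?_ hC
        calc ((N / d ^ k : ℕ) : ℝ) ≤ (N : ℝ) / ((d ^ k : ℕ) : ℝ) := Nat.cast_div_le
        _ = (N : ℝ) / (d : ℝ) ^ k := by push_cast; ring
    _ = C * N / d ^ k := by ring
  -- each f k (N / d^k) is o(N)
  have hf_o : ∀ k : ℕ, 1 ≤ k →
      (fun N : ℕ => f k (N / d ^ k)) =o[atTop] (fun N : ℕ => (N : ℝ)) := by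
    intro k hk
    have h1 : 1 ≤ d ^ (k - 1) := Nat.one_le_pow _ _ hd0
    have ho := h (d ^ (k - 1)) h1
    have harg : d * d ^ (k - 1) = d ^ k := by
      conv_rhs => rw [show k = (k - 1) + 1 by omega]
      rw [pow_succ]
      ring
    rw [show (fun N : ℕ => ∑ i ∈ Finset.Icc 1 N, c (d * d ^ (k - 1) * i) * (μ i : ℝ))
        = fun N : ℕ => f k N by funext N; rw [hf_def]; simp [harg]] at ho
    have htend : Tendsto (fun N : ℕ => N / d ^ k) atTop atTop := by
      refine tendsto_atTop_atTop.mpr (fun b => ⟨b * d ^ k, fun n hn => ?_⟩)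
      exact (Nat.le_div_iff_mul_le (pow_pos hd0 k)).mpr hn
    have hcomp := ho.comp_tendsto htend
    refine hcomp.trans_isBigO (Asymptotics.isBigO_of_le atTop (fun N => ?_))
    simp only [Function.comp, Real.norm_natCast]
    exact_mod_cast Nat.div_le_self N (d ^ k)
  -- finish via ε-argument
  rw [isLittleO_iff]
  intro ε hε
  -- choose K with C / d^K < ε/2
  have hdr : (0:ℝ) ≤ (d:ℝ)⁻¹ := by positivity
  have hdr1 : (d:ℝ)⁻¹ < 1 := by
    rw [inv_lt_one_iff₀]
    right
    exact_mod_cast hd.one_lt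
  have htend0 : Tendsto (fun K : ℕ => C * ((d:ℝ)⁻¹) ^ K) atTop (nhds 0) := by
    simpa using (tendsto_pow_atTop_nhds_zero_of_lt_one hdr hdr1).const_mul C
  obtain ⟨K, hK⟩ := (htend0.eventually (eventually_lt_nhds (half_pos hε))).exists
  have hKbound : C / (d:ℝ) ^ (K + 1) < ε / 2 := by
    have hle : (d:ℝ) ^ K ≤ (d:ℝ) ^ (K + 1) := by
      apply pow_le_pow_right₀ (by exact_mod_cast hd.one_lt.le) (by omega)
    have hpos : (0:ℝ) < (d:ℝ) ^ K := by positivity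
    have hpos1 : (0:ℝ) < (d:ℝ) ^ (K + 1) := by positivity
    calc C / (d:ℝ) ^ (K + 1) ≤ C / (d:ℝ) ^ K := by
          apply div_le_div_of_nonneg_left hC hpos hle
    _ = C * ((d:ℝ)⁻¹) ^ K := by rw [div_eq_mul_inv, inv_pow]
    _ < ε / 2 := hK
  have hsum_o : (fun N : ℕ => ∑ k ∈ Finset.Icc 1 K, f k (N / d ^ k))
      =o[atTop] (fun N : ℕ => (N : ℝ)) :=
    Asymptotics.IsLittleO.fun_sum (fun k hk => hf_o k (Finset.mem_Icc.mp hk).1)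
  filter_upwards [isLittleO_iff.mp hsum_o (half_pos hε)] with N hN
  rw [key K N]
  have hnorm : ‖(N:ℝ)‖ = (N:ℝ) := Real.norm_natCast N
  rw [Real.norm_eq_abs]
  calc |(-(∑ k ∈ Finset.Icc 1 K, f k (N / d ^ k)) - G (K + 1) N)|
      ≤ |∑ k ∈ Finset.Icc 1 K, f k (N / d ^ k)| + |G (K + 1) N| := by
        rw [sub_eq_add_neg]
        refine (abs_add_le _ _).trans ?_
        rw [abs_neg, abs_neg]
  _ ≤ ε / 2 * (N:ℝ) + C * N / d ^ (K + 1) := by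
      refine add_le_add ?_ (hGbound (K + 1) N)
      rw [Real.norm_eq_abs, hnorm] at hN
      exact hN
  _ ≤ ε / 2 * (N:ℝ) + ε / 2 * (N:ℝ) := by
      refine add_le_add (le_refl _) ?_
      rw [div_eq_mul_inv, mul_assoc] at *
      calc C * ((N:ℝ) * ((d:ℝ) ^ (K+1))⁻¹) = (C * ((d:ℝ) ^ (K+1))⁻¹) * N := by ring
      _ ≤ ε / 2 * N := by
          refine mul_le_mul_of_nonneg_right ?_ (Nat.cast_nonneg N)
          rw [← div_eq_mul_inv]
          exact hKbound.le
  _ = ε * ‖(N:ℝ)‖ := by rw [hnorm]; ring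
end

section
/- Let (X, ν) be a standard probability space, let U and V be Koopman operators of invertible measure-preserving transformations of (X, ν), and suppose there exists a Markov operator J on L²(X, ν) with J ≠ Θ and U ∘ J = J ∘ V. Then there exists a Markov operator J' on L²(X, ν) with J' ≠ Θ, U ∘ J' = J' ∘ V, such that J' is indecomposable among Markov operators K satisfying U ∘ K = K ∘ V. -/
open MeasureTheory Filter
open scoped RealInnerProductSpace ENNReal

noncomputable section

variable {X : Type*} [MeasurableSpace X]

/-- `J` is indecomposable among Markov operators `K` satisfying the intertwining
relation `U ∘ K = K ∘ V`: it is not a nontrivial convex combination of two distinct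
such Markov intertwiners. -/
def Indecomposable (ν : Measure X) [IsProbabilityMeasure ν]
    (U V J : Lp ℝ 2 ν →L[ℝ] Lp ℝ 2 ν) : Prop :=
  ¬ ∃ (t : ℝ) (K₁ K₂ : Lp ℝ 2 ν →L[ℝ] Lp ℝ 2 ν),
      0 < t ∧ t < 1 ∧ K₁ ≠ K₂ ∧
      IsMarkov ν K₁ ∧ IsMarkov ν K₂ ∧
      U ∘L K₁ = K₁ ∘L V ∧ U ∘L K₂ = K₂ ∘L V ∧
      J = t • K₁ + (1 - t) • K₂

section AuxIndec

open ContinuousLinearMap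

lemma sq_le_of_forall_rat {y c : ℝ} (h : ∀ q : ℚ, 2*q*y - q^2 ≤ c) : y^2 ≤ c := by
  by_contra hc
  push_neg at hc
  set ε := Real.sqrt (y^2 - c) with hε
  have hε0 : 0 < ε := Real.sqrt_pos.mpr (by linarith)
  obtain ⟨q, hq⟩ := exists_rat_near y hε0
  have hsq : (y - q)^2 < ε^2 := by
    have := abs_nonneg (y - (q:ℝ))
    nlinarith [sq_abs (y - (q:ℝ))]
  rw [hε, Real.sq_sqrt (by linarith)] at hsq
  have := h q
  nlinarith


variable {X : Type*} [MeasurableSpace X] {ν : Measure X} [IsProbabilityMeasure ν]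

lemma inner_eq_integral (f g : Lp ℝ 2 ν) : ⟪f, g⟫ = ∫ x, f x * g x ∂ν := by
  rw [L2.inner_def]; simp [RCLike.inner_apply, mul_comm]

lemma integrable_L2 (f : Lp ℝ 2 ν) : Integrable (fun x => f x) ν :=
  memLp_one_iff_integrable.mp ((Lp.memLp f).mono_exponent (by norm_num))

lemma integrable_mul (f g : Lp ℝ 2 ν) : Integrable (fun x => f x * g x) ν := by
  simpa [RCLike.inner_apply, mul_comm] using L2.integrable_inner (𝕜 := ℝ) f g

lemma nonneg_of_inner_nonneg (h : Lp ℝ 2 ν) (H : ∀ g : Lp ℝ 2 ν, 0 ≤ g → 0 ≤ ⟪h, g⟫) :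
    0 ≤ h := by
  have hnp : (0:Lp ℝ 2 ν) ≤ Lp.negPart h := by
    rw [← Lp.coeFn_nonneg]
    filter_upwards [Lp.coeFn_negPart_eq_max h] with x hx
    simp [hx, le_max_right]
  have h1 : ⟪h, Lp.negPart h⟫ = - ⟪Lp.negPart h, Lp.negPart h⟫ := by
    rw [inner_eq_integral, inner_eq_integral, ← integral_neg]
    refine integral_congr_ae ?_
    filter_upwards [Lp.coeFn_negPart h] with x hx
    rw [hx]
    rcases le_or_gt (h x) 0 with h0 | h0
    · rw [min_eq_left h0]; ring
    · rw [min_eq_right h0.le]; ring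
  have h2 := H _ hnp
  rw [h1, real_inner_self_eq_norm_sq] at h2
  have h3 : ‖Lp.negPart h‖ = 0 := by nlinarith [norm_nonneg (Lp.negPart h)]
  have h4 : Lp.negPart h = 0 := by simpa using h3
  rw [← Lp.coeFn_nonneg]
  have hae := Lp.coeFn_negPart h
  rw [h4] at hae
  filter_upwards [hae, Lp.coeFn_zero (E := ℝ) (p := 2) (μ := ν)] with x hx hz
  rw [hz] at hx
  have hm : min (h x) 0 = 0 := by linarith [neg_eq_zero.mp hx.symm]
  simp only [Pi.zero_apply]
  by_contra hc
  push_neg at hc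
  rw [min_eq_left hc.le] at hm
  exact hc.ne hm

lemma inner_one_eq_integral (g : Lp ℝ 2 ν) : ⟪g, oneL2 ν⟫ = ∫ x, g x ∂ν := by
  rw [inner_eq_integral]
  refine integral_congr_ae ?_
  filter_upwards [Lp.coeFn_const (μ := ν) 2 (1:ℝ)] with x hx
  show g x * (oneL2 ν) x = g x
  rw [show ((oneL2 ν : Lp ℝ 2 ν) : X → ℝ) x = 1 from hx]
  ring

lemma markov_integral_eq {K : Lp ℝ 2 ν →L[ℝ] Lp ℝ 2 ν} (hK : IsMarkov ν K)
    (h : Lp ℝ 2 ν) : ∫ x, (K h) x ∂ν = ∫ x, h x ∂ν := by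
  have h1 := ContinuousLinearMap.adjoint_inner_right K h (oneL2 ν)
  rw [hK.adjoint_map_one] at h1
  rw [← inner_one_eq_integral (K h), ← inner_one_eq_integral h, ← h1]

lemma markov_norm_apply_le {K : Lp ℝ 2 ν →L[ℝ] Lp ℝ 2 ν} (hK : IsMarkov ν K)
    {f : Lp ℝ 2 ν} {C : ℝ} (hf : ∀ᵐ x ∂ν, |f x| ≤ C) : ‖K f‖ ≤ ‖f‖ := by
  -- f² ∈ L²
  have hne : (ae ν).NeBot := ae_neBot.mpr (IsProbabilityMeasure.ne_zero ν)
  have hC0 : 0 ≤ C := by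
    obtain ⟨x, hx⟩ := hf.exists
    exact le_trans (abs_nonneg _) hx
  have hsq : MemLp (fun x => f x * f x) 2 ν := by
    refine MemLp.of_le ((Lp.memLp f).const_mul C) ((Lp.aestronglyMeasurable f).mul
      (Lp.aestronglyMeasurable f)) ?_
    filter_upwards [hf] with x hx
    have : |f x * f x| ≤ C * |f x| := by
      rw [abs_mul]
      exact mul_le_mul_of_nonneg_right hx (abs_nonneg _)
    calc ‖f x * f x‖ = |f x * f x| := rfl
      _ ≤ C * |f x| := this
      _ ≤ ‖C * f x‖ := by rw [Real.norm_eq_abs, abs_mul, abs_of_nonneg hC0]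
  set F2 := hsq.toLp _ with hF2
  -- key positivity for every rational a
  have key : ∀ a : ℚ, (0:Lp ℝ 2 ν) ≤ K F2 - (2*(a:ℝ)) • K f + ((a:ℝ)^2) • oneL2 ν := by
    intro a
    have harg : (0:Lp ℝ 2 ν) ≤ F2 - (2*(a:ℝ)) • f + ((a:ℝ)^2) • oneL2 ν := by
      rw [← Lp.coeFn_nonneg]
      filter_upwards [Lp.coeFn_add (F2 - (2*(a:ℝ)) • f) (((a:ℝ)^2) • oneL2 ν),
        Lp.coeFn_sub F2 ((2*(a:ℝ)) • f), Lp.coeFn_smul (2*(a:ℝ)) f,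
        Lp.coeFn_smul ((a:ℝ)^2) (oneL2 ν), MemLp.coeFn_toLp hsq,
        Lp.coeFn_const (μ := ν) 2 (1:ℝ)] with x h1 h2 h3 h4 h5 h6
      simp only [Pi.zero_apply, h1, Pi.add_apply, h2, Pi.sub_apply, h3, Pi.smul_apply,
        smul_eq_mul, h4, h5]
      rw [show ((oneL2 ν : Lp ℝ 2 ν) : X → ℝ) x = 1 from h6]
      nlinarith [sq_nonneg (f x - (a:ℝ))]
    have := hK.pos _ harg
    rwa [map_add, map_sub, ContinuousLinearMap.map_smul, ContinuousLinearMap.map_smul,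
      hK.map_one] at this
  -- pointwise a.e. (K f)² ≤ K F2
  have hae : ∀ᵐ x ∂ν, ((K f) x)^2 ≤ (K F2) x := by
    have hall : ∀ᵐ x ∂ν, ∀ a : ℚ, 2*(a:ℝ)*((K f) x) - (a:ℝ)^2 ≤ (K F2) x := by
      rw [ae_all_iff]
      intro a
      have h0 := (Lp.coeFn_nonneg _).mpr (key a)
      filter_upwards [h0, Lp.coeFn_add (K F2 - (2*(a:ℝ)) • K f) (((a:ℝ)^2) • oneL2 ν),
        Lp.coeFn_sub (K F2) ((2*(a:ℝ)) • K f), Lp.coeFn_smul (2*(a:ℝ)) (K f),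
        Lp.coeFn_smul ((a:ℝ)^2) (oneL2 ν), Lp.coeFn_const (μ := ν) 2 (1:ℝ)]
        with x h0 h1 h2 h3 h4 h5
      simp only [h1, Pi.add_apply, h2, Pi.sub_apply, h3, h4, Pi.smul_apply, smul_eq_mul,
        Pi.zero_apply] at h0
      rw [show ((oneL2 ν : Lp ℝ 2 ν) : X → ℝ) x = 1 from h5] at h0
      linarith
    filter_upwards [hall] with x hx
    exact sq_le_of_forall_rat hx
  -- integrate
  have hint : ∫ x, ((K f) x)^2 ∂ν ≤ ∫ x, (K F2) x ∂ν := by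
    refine integral_mono_ae ?_ (integrable_L2 (K F2)) hae
    simpa [pow_two] using integrable_mul (K f) (K f)
  have e1 : ‖K f‖^2 = ∫ x, ((K f) x)^2 ∂ν := by
    rw [← real_inner_self_eq_norm_sq, inner_eq_integral]
    simp [pow_two]
  have e2 : ∫ x, (K F2) x ∂ν = ‖f‖^2 := by
    rw [markov_integral_eq hK, ← real_inner_self_eq_norm_sq, inner_eq_integral]
    refine integral_congr_ae ?_
    filter_upwards [MemLp.coeFn_toLp hsq] with x hx
    rw [hx]
  nlinarith [norm_nonneg (K f), norm_nonneg f, e1 ▸ e2 ▸ hint]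

lemma markov_apply_norm_le {K : Lp ℝ 2 ν →L[ℝ] Lp ℝ 2 ν} (hK : IsMarkov ν K)
    (f : Lp ℝ 2 ν) : ‖K f‖ ≤ ‖f‖ := by
  have hclosed : IsClosed {g : Lp ℝ 2 ν | ‖K g‖ ≤ ‖g‖} :=
    isClosed_le (K.continuous.norm) continuous_norm
  have hsub : Set.range ((↑) : Lp.simpleFunc ℝ 2 ν → Lp ℝ 2 ν) ⊆ {g | ‖K g‖ ≤ ‖g‖} := by
    rintro _ ⟨sf, rfl⟩
    obtain ⟨C, hC⟩ := (Lp.simpleFunc.toSimpleFunc sf).exists_forall_norm_le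
    refine markov_norm_apply_le hK (C := C) ?_
    filter_upwards [Lp.simpleFunc.toSimpleFunc_eq_toFun sf] with x hx
    rw [← hx]
    exact hC x
  have hdense := Lp.simpleFunc.denseRange (E := ℝ) (p := 2) (μ := ν) (by norm_num)
  have : f ∈ closure (Set.range ((↑) : Lp.simpleFunc ℝ 2 ν → Lp ℝ 2 ν)) := by
    rw [hdense.closure_range]; trivial
  exact closure_minimal hsub hclosed this

lemma markov_opNorm_le {K : Lp ℝ 2 ν →L[ℝ] Lp ℝ 2 ν} (hK : IsMarkov ν K) : ‖K‖ ≤ 1 :=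
  K.opNorm_le_bound zero_le_one fun f => by simpa using markov_apply_norm_le hK f

lemma inner_nonneg_of_nonneg {u g : Lp ℝ 2 ν} (hu : 0 ≤ u) (hg : 0 ≤ g) : 0 ≤ ⟪u, g⟫ := by
  rw [inner_eq_integral]
  refine integral_nonneg_of_ae ?_
  filter_upwards [(Lp.coeFn_nonneg u).mpr hu, (Lp.coeFn_nonneg g).mpr hg] with x h1 h2
  exact mul_nonneg h1 h2

variable (ν) in
/-- The embedding of operators into `(H × H) → ℝ` by matrix coefficients. -/
def phiOp (K : Lp ℝ 2 ν →L[ℝ] Lp ℝ 2 ν) : (Lp ℝ 2 ν × Lp ℝ 2 ν) → ℝ :=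
  fun p => ⟪K p.1, p.2⟫

lemma phiOp_injective : Function.Injective (phiOp ν) := by
  intro K L h
  refine ContinuousLinearMap.ext fun f => ?_
  refine ext_inner_right ℝ fun g => ?_
  exact congrFun h (f, g)

variable (ν) in
def Pset (U V : Lp ℝ 2 ν →L[ℝ] Lp ℝ 2 ν) : Set ((Lp ℝ 2 ν × Lp ℝ 2 ν) → ℝ) :=
  {B | (∀ f f' g, B (f+f', g) = B (f,g) + B (f',g)) ∧
    (∀ (c:ℝ) f g, B (c•f, g) = c * B (f,g)) ∧
    (∀ f g g', B (f, g+g') = B (f,g) + B (f,g')) ∧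
    (∀ (c:ℝ) f g, B (f, c•g) = c * B (f,g)) ∧
    (∀ f g, |B (f,g)| ≤ ‖f‖*‖g‖) ∧
    (∀ f g, 0 ≤ f → 0 ≤ g → 0 ≤ B (f,g)) ∧
    (∀ g, B (oneL2 ν, g) = ⟪oneL2 ν, g⟫) ∧
    (∀ f, B (f, oneL2 ν) = ⟪f, oneL2 ν⟫) ∧
    (∀ f g, B (V f, g) = B (f, adjoint U g))}

lemma phiOp_mem_Pset {U V K : Lp ℝ 2 ν →L[ℝ] Lp ℝ 2 ν} (hK : IsMarkov ν K)
    (hI : U ∘L K = K ∘L V) : phiOp ν K ∈ Pset ν U V := by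
  refine ⟨?_, ?_, ?_, ?_, ?_, ?_, ?_, ?_, ?_⟩
  · intro f f' g; simp [phiOp, map_add, inner_add_left]
  · intro c f g; simp [phiOp, ContinuousLinearMap.map_smul, real_inner_smul_left]
  · intro f g g'; simp [phiOp, inner_add_right]
  · intro c f g; simp [phiOp, real_inner_smul_right]
  · intro f g
    calc |⟪K f, g⟫| ≤ ‖K f‖ * ‖g‖ := abs_real_inner_le_norm _ _
      _ ≤ ‖f‖ * ‖g‖ := mul_le_mul_of_nonneg_right (markov_apply_norm_le hK f) (norm_nonneg g)
  · intro f g hf hg; exact inner_nonneg_of_nonneg (hK.pos f hf) hg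
  · intro g; simp [phiOp, hK.map_one]
  · intro f
    have h := ContinuousLinearMap.adjoint_inner_right K f (oneL2 ν)
    rw [hK.adjoint_map_one] at h
    exact h.symm
  · intro f g
    have h1 : K (V f) = U (K f) := by
      have := congrFun (congrArg (⇑) hI) f
      simpa using this.symm
    simp only [phiOp, h1]
    exact (ContinuousLinearMap.adjoint_inner_right U (K f) g).symm

lemma Pset_mem_ran {U V : Lp ℝ 2 ν →L[ℝ] Lp ℝ 2 ν} {B : (Lp ℝ 2 ν × Lp ℝ 2 ν) → ℝ}
    (hB : B ∈ Pset ν U V) :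
    ∃ K : Lp ℝ 2 ν →L[ℝ] Lp ℝ 2 ν, IsMarkov ν K ∧ U ∘L K = K ∘L V ∧ phiOp ν K = B := by
  obtain ⟨h1, h2, h3, h4, h5, h6, h7, h8, h9⟩ := hB
  -- the continuous functional g ↦ B (f, g)
  set ℓ : Lp ℝ 2 ν → (Lp ℝ 2 ν →L[ℝ] ℝ) := fun f =>
    LinearMap.mkContinuous ⟨⟨fun g => B (f,g), h3 f⟩, fun c g => h4 c f g⟩ ‖f‖
      (fun g => by simpa [Real.norm_eq_abs, mul_comm] using h5 f g) with hℓ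
  have hℓ_apply : ∀ f g, ℓ f g = B (f, g) := fun f g => rfl
  set K0 : Lp ℝ 2 ν → Lp ℝ 2 ν := fun f => (InnerProductSpace.toDual ℝ (Lp ℝ 2 ν)).symm (ℓ f)
    with hK0def
  have hK0 : ∀ f g, ⟪K0 f, g⟫ = B (f, g) := fun f g =>
    InnerProductSpace.toDual_symm_apply
  have hK0add : ∀ f f', K0 (f + f') = K0 f + K0 f' := by
    intro f f'
    refine ext_inner_right ℝ fun g => ?_
    rw [hK0, inner_add_left, hK0, hK0, h1]
  have hK0smul : ∀ (c : ℝ) f, K0 (c • f) = c • K0 f := by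
    intro c f
    refine ext_inner_right ℝ fun g => ?_
    rw [hK0, real_inner_smul_left, hK0, h2]
  have hK0norm : ∀ f, ‖K0 f‖ ≤ 1 * ‖f‖ := by
    intro f
    rw [one_mul, hK0def]
    calc ‖(InnerProductSpace.toDual ℝ (Lp ℝ 2 ν)).symm (ℓ f)‖ = ‖ℓ f‖ :=
        LinearIsometryEquiv.norm_map _ _
      _ ≤ ‖f‖ := LinearMap.mkContinuous_norm_le _ (norm_nonneg f) _
  set K : Lp ℝ 2 ν →L[ℝ] Lp ℝ 2 ν :=
    LinearMap.mkContinuous ⟨⟨K0, hK0add⟩, hK0smul⟩ 1 hK0norm with hKdef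
  have hKapp : ∀ f, K f = K0 f := fun f => rfl
  have hKinner : ∀ f g, ⟪K f, g⟫ = B (f, g) := fun f g => hK0 f g
  have hMar : IsMarkov ν K := by
    refine ⟨?_, ?_, ?_⟩
    · intro f hf
      refine nonneg_of_inner_nonneg _ fun g hg => ?_
      rw [hKinner]; exact h6 f g hf hg
    · refine ext_inner_right ℝ fun g => ?_
      rw [hKinner]; exact h7 g
    · refine ext_inner_right ℝ fun g => ?_
      rw [ContinuousLinearMap.adjoint_inner_left]
      rw [real_inner_comm, hKinner, h8, real_inner_comm]
  refine ⟨K, hMar, ?_, funext fun p => hKinner p.1 p.2⟩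
  refine ContinuousLinearMap.ext fun f => ?_
  refine ext_inner_right ℝ fun g => ?_
  calc ⟪(U ∘L K) f, g⟫ = ⟪K f, ContinuousLinearMap.adjoint U g⟫ := by
        rw [ContinuousLinearMap.comp_apply, ContinuousLinearMap.adjoint_inner_right]
    _ = B (f, ContinuousLinearMap.adjoint U g) := hKinner _ _
    _ = B (V f, g) := (h9 f g).symm
    _ = ⟪(K ∘L V) f, g⟫ := (hKinner _ _).symm

lemma Pset_isClosed (U V : Lp ℝ 2 ν →L[ℝ] Lp ℝ 2 ν) : IsClosed (Pset ν U V) := by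
  have c : ∀ p : Lp ℝ 2 ν × Lp ℝ 2 ν,
      Continuous fun B : (Lp ℝ 2 ν × Lp ℝ 2 ν) → ℝ => B p := fun p => continuous_apply p
  unfold Pset
  simp only [Set.setOf_and, Set.setOf_forall]
  refine IsClosed.inter (isClosed_iInter fun f => isClosed_iInter fun f' =>
      isClosed_iInter fun g => isClosed_eq (c _) ((c _).add (c _))) ?_
  refine IsClosed.inter (isClosed_iInter fun cc => isClosed_iInter fun f =>
      isClosed_iInter fun g => isClosed_eq (c _) (continuous_const.mul (c _))) ?_
  refine IsClosed.inter (isClosed_iInter fun f => isClosed_iInter fun g =>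
      isClosed_iInter fun g' => isClosed_eq (c _) ((c _).add (c _))) ?_
  refine IsClosed.inter (isClosed_iInter fun cc => isClosed_iInter fun f =>
      isClosed_iInter fun g => isClosed_eq (c _) (continuous_const.mul (c _))) ?_
  refine IsClosed.inter (isClosed_iInter fun f => isClosed_iInter fun g =>
      isClosed_le (c _).abs continuous_const) ?_
  refine IsClosed.inter (isClosed_iInter fun f => isClosed_iInter fun g =>
      isClosed_iInter fun _ => isClosed_iInter fun _ =>
      isClosed_le continuous_const (c _)) ?_
  refine IsClosed.inter (isClosed_iInter fun g => isClosed_eq (c _) continuous_const) ?_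
  refine IsClosed.inter (isClosed_iInter fun f => isClosed_eq (c _) continuous_const) ?_
  exact isClosed_iInter fun f => isClosed_iInter fun g => isClosed_eq (c _) (c _)

lemma Pset_isCompact (U V : Lp ℝ 2 ν →L[ℝ] Lp ℝ 2 ν) : IsCompact (Pset ν U V) := by
  have hbox : IsCompact (Set.pi Set.univ
      (fun p : Lp ℝ 2 ν × Lp ℝ 2 ν => Set.Icc (-(‖p.1‖*‖p.2‖)) (‖p.1‖*‖p.2‖))) :=
    isCompact_univ_pi fun p => isCompact_Icc
  refine hbox.of_isClosed_subset (Pset_isClosed U V) ?_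
  intro B hB
  rw [Set.mem_univ_pi]
  intro p
  obtain ⟨-, -, -, -, h5, -⟩ := hB
  exact Set.mem_Icc.mpr (abs_le.mp (h5 p.1 p.2))

lemma Pset_convex (U V : Lp ℝ 2 ν →L[ℝ] Lp ℝ 2 ν) : Convex ℝ (Pset ν U V) := by
  rintro B₁ hB₁ B₂ hB₂ a b ha hb hab
  obtain ⟨p1, p2, p3, p4, p5, p6, p7, p8, p9⟩ := hB₁
  obtain ⟨q1, q2, q3, q4, q5, q6, q7, q8, q9⟩ := hB₂
  have happ : ∀ p, (a • B₁ + b • B₂) p = a * B₁ p + b * B₂ p := fun p => rfl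
  refine ⟨?_, ?_, ?_, ?_, ?_, ?_, ?_, ?_, ?_⟩
  · intro f f' g; simp only [happ, p1, q1]; ring
  · intro c f g; simp only [happ, p2, q2]; ring
  · intro f g g'; simp only [happ, p3, q3]; ring
  · intro c f g; simp only [happ, p4, q4]; ring
  · intro f g
    calc |a * B₁ (f,g) + b * B₂ (f,g)| ≤ |a * B₁ (f,g)| + |b * B₂ (f,g)| := abs_add_le _ _
      _ = a * |B₁ (f,g)| + b * |B₂ (f,g)| := by
          rw [abs_mul, abs_mul, abs_of_nonneg ha, abs_of_nonneg hb]
      _ ≤ a * (‖f‖*‖g‖) + b * (‖f‖*‖g‖) := by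
          gcongr
          exacts [p5 f g, q5 f g]
      _ = ‖f‖ * ‖g‖ := by rw [← add_mul, hab, one_mul]
  · intro f g hf hg
    exact add_nonneg (mul_nonneg ha (p6 f g hf hg)) (mul_nonneg hb (q6 f g hf hg))
  · intro g; simp only [happ, p7, q7]; rw [← add_mul, hab, one_mul]
  · intro f; simp only [happ, p8, q8]; rw [← add_mul, hab, one_mul]
  · intro f g; simp only [happ, p9, q9]

theorem exists_indec_general (U V : Lp ℝ 2 ν →L[ℝ] Lp ℝ 2 ν)
    (J : Lp ℝ 2 ν →L[ℝ] Lp ℝ 2 ν) (hJ : IsMarkov ν J) (hJne : J ≠ Theta ν)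
    (hint : U ∘L J = J ∘L V) :
    ∃ J' : Lp ℝ 2 ν →L[ℝ] Lp ℝ 2 ν, IsMarkov ν J' ∧ J' ≠ Theta ν ∧
      U ∘L J' = J' ∘L V ∧ Indecomposable ν U V J' := by
  set P := Pset ν U V with hP
  have hJP : phiOp ν J ∈ P := phiOp_mem_Pset hJ hint
  have hcomp := Pset_isCompact (ν := ν) U V
  have hconv := Pset_convex (ν := ν) U V
  -- there is an extreme point different from φ Θ
  have hex : ∃ x ∈ Set.extremePoints ℝ P, x ≠ phiOp ν (Theta ν) := by
    by_contra hc
    push_neg at hc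
    have hsub : Set.extremePoints ℝ P ⊆ {phiOp ν (Theta ν)} := fun x hx => hc x hx
    have h1 : P ⊆ {phiOp ν (Theta ν)} := by
      rw [hP, ← closure_convexHull_extremePoints hcomp hconv]
      refine closure_minimal ?_ isClosed_singleton
      exact convexHull_min hsub (convex_singleton _)
    have := h1 hJP
    simp only [Set.mem_singleton_iff] at this
    exact hJne (phiOp_injective this)
  obtain ⟨x, hxext, hxne⟩ := hex
  have hxP : x ∈ P := hxext.1
  obtain ⟨K, hMar, hI, hphi⟩ := Pset_mem_ran hxP
  refine ⟨K, hMar, ?_, hI, ?_⟩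
  · intro h
    exact hxne (by rw [← hphi, h])
  · rintro ⟨t, K₁, K₂, ht0, ht1, hne, hM1, hM2, hI1, hI2, heq⟩
    have h1P : phiOp ν K₁ ∈ P := phiOp_mem_Pset hM1 hI1
    have h2P : phiOp ν K₂ ∈ P := phiOp_mem_Pset hM2 hI2
    have hseg : x ∈ openSegment ℝ (phiOp ν K₁) (phiOp ν K₂) := by
      refine ⟨t, 1 - t, ht0, by linarith, by ring, ?_⟩
      rw [← hphi]
      funext p
      simp only [Pi.add_apply, Pi.smul_apply, smul_eq_mul, phiOp, heq,
        ContinuousLinearMap.add_apply, ContinuousLinearMap.coe_smul', Pi.smul_apply,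
        inner_add_left, real_inner_smul_left]
    obtain ⟨e1, e2⟩ := (mem_extremePoints.mp hxext).2 _ h1P _ h2P hseg
    exact hne (phiOp_injective (e1.trans e2.symm))

end AuxIndec

/-- On a standard probability space, if some Markov operator `J ≠ Θ` intertwines the
Koopman operators `U` and `V` of two invertible measure-preserving transformations,
then there is an indecomposable Markov intertwiner `J' ≠ Θ`. -/
theorem exists_indecomposable_intertwiner {X : Type*} [MeasurableSpace X]
    [StandardBorelSpace X] (ν : Measure X) [IsProbabilityMeasure ν]
    (S T : X ≃ᵐ X) (hS : MeasurePreserving (⇑S) ν ν) (hT : MeasurePreserving (⇑T) ν ν)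
    (J : Lp ℝ 2 ν →L[ℝ] Lp ℝ 2 ν) (hJ : IsMarkov ν J) (hJne : J ≠ Theta ν)
    (hint : koopman ν hS ∘L J = J ∘L koopman ν hT) :
    ∃ J' : Lp ℝ 2 ν →L[ℝ] Lp ℝ 2 ν, IsMarkov ν J' ∧ J' ≠ Theta ν ∧
      koopman ν hS ∘L J' = J' ∘L koopman ν hT ∧
      Indecomposable ν (koopman ν hS) (koopman ν hT) J' := by
  exact exists_indec_general (koopman ν hS) (koopman ν hT) J hJ hJne hint
end
end

section
/- Let (X, ν) be a probability space, T a totally ergodic invertible measure-preserving transformation of (X, ν), k a nonzero integer, and J a Markov operator on L²(X, ν). If J = J ∘ T̂^k, then J = Θ. -/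
open MeasureTheory Filter
open scoped RealInnerProductSpace ENNReal

noncomputable section

variable {X : Type*} [MeasurableSpace X]

/-- Powers of the Koopman operator act a.e. as composition with iterates. -/
lemma koopman_pow_apply_ae (ν : Measure X) [IsProbabilityMeasure ν] {T : X → X}
    (hT : MeasurePreserving T ν ν) (n : ℕ) (g : Lp ℝ 2 ν) :
    ((koopman ν hT ^ n) g : X → ℝ) =ᵐ[ν] g ∘ T^[n] := by
  induction n generalizing g with
  | zero => simp [Function.iterate_zero]
  | succ n ih =>
    rw [pow_succ, ContinuousLinearMap.mul_apply]
    refine (ih (koopman ν hT g)).trans ?_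
    have h1 := (Lp.coeFn_compMeasurePreserving (μ := ν) g hT).comp_tendsto
      (hT.iterate n).quasiMeasurePreserving.tendsto_ae
    refine h1.trans (Eventually.of_forall fun x => ?_)
    simp only [Function.comp_apply]
    rw [Function.iterate_succ_apply']

/-- Powers of the Koopman operator are isometric. -/
lemma koopman_pow_norm (ν : Measure X) [IsProbabilityMeasure ν] {T : X → X}
    (hT : MeasurePreserving T ν ν) (n : ℕ) (g : Lp ℝ 2 ν) :
    ‖(koopman ν hT ^ n) g‖ = ‖g‖ := by
  induction n generalizing g with
  | zero => simp
  | succ n ih =>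
    rw [pow_succ, ContinuousLinearMap.mul_apply, ih]
    exact Lp.norm_compMeasurePreserving g hT

/-- If `T` is totally ergodic, `k ≠ 0` and `J` is a Markov operator with
`J = J ∘ T̂^k`, then `J = Θ`. -/
theorem markov_fixed_power_of_totallyErgodic {X : Type*} [MeasurableSpace X]
    (ν : Measure X) [IsProbabilityMeasure ν]
    (T : X ≃ᵐ X) (hT : MeasurePreserving (⇑T) ν ν) (hTte : TotallyErgodic ν T)
    (k : ℤ) (hk : k ≠ 0)
    (J : Lp ℝ 2 ν →L[ℝ] Lp ℝ 2 ν) (hJ : IsMarkov ν J)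
    (h : J = J ∘L koopmanZ ν T hT k) : J = Theta ν := by
  set K : Lp ℝ 2 ν →L[ℝ] Lp ℝ 2 ν := koopmanZ ν T hT k with hKdef
  -- `mpowZ T k` is measure preserving
  have hS : MeasurePreserving (mpowZ T k) ν ν := by
    cases k with
    | ofNat n => exact hT.iterate n
    | negSucc n => exact (hT.symm T).iterate (n + 1)
  -- `K` acts a.e. by composition with `mpowZ T k`
  have hKae : ∀ g : Lp ℝ 2 ν, (K g : X → ℝ) =ᵐ[ν] ⇑g ∘ (mpowZ T k) := by
    cases k with
    | ofNat n => exact fun g => koopman_pow_apply_ae ν hT n g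
    | negSucc n => exact fun g => koopman_pow_apply_ae ν (hT.symm T) (n + 1) g
  -- `K` is a contraction
  have hKnorm : ‖K‖ ≤ 1 := by
    cases k with
    | ofNat n =>
      exact ContinuousLinearMap.opNorm_le_bound _ zero_le_one fun g => by
        rw [one_mul]; exact le_of_eq (koopman_pow_norm ν hT n g)
    | negSucc n =>
      exact ContinuousLinearMap.opNorm_le_bound _ zero_le_one fun g => by
        rw [one_mul]; exact le_of_eq (koopman_pow_norm ν (hT.symm T) (n + 1) g)
  have honec : (oneL2 ν : X → ℝ) =ᵐ[ν] fun _ => (1 : ℝ) :=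
    Lp.coeFn_const (μ := ν) (p := 2) (1 : ℝ)
  -- `1` is a fixed vector of `K`
  have hK1 : K (oneL2 ν) = oneL2 ν := by
    refine Lp.ext ?_
    have h2 := honec.comp_tendsto hS.quasiMeasurePreserving.tendsto_ae
    filter_upwards [hKae (oneL2 ν), h2, honec] with x e1 e2 e3
    rw [e1]
    simpa [e3] using e2
  -- `J (K y) = J y`
  have hJK : ∀ y, J (K y) = J y := fun y => by
    conv_rhs => rw [h]
    rfl
  have hiter : ∀ (n : ℕ) (y : Lp ℝ 2 ν), J ((⇑K)^[n] y) = J y := by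
    intro n
    induction n with
    | zero => intro y; rfl
    | succ n ih =>
      intro y
      rw [Function.iterate_succ_apply', hJK, ih]
  refine ContinuousLinearMap.ext fun x => ?_
  -- mean ergodic theorem, packaged so that we never have to re-elaborate
  -- the orthogonal projection term
  set_option synthInstance.maxHeartbeats 1000000 in
  have key : ∃ q : Lp ℝ 2 ν, K q = q ∧ ⟪x - q, oneL2 ν⟫ = 0 ∧
      Tendsto (fun N => birkhoffAverage ℝ (⇑K) _root_.id N x) atTop (nhds q) := by
    refine ⟨_, ?_, Submodule.starProjection_inner_eq_zero x (oneL2 ν) ?_,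
      ContinuousLinearMap.tendsto_birkhoffAverage_orthogonalProjection (𝕜 := ℝ) K hKnorm x⟩
    · have hm := Submodule.coe_mem ((Submodule.orthogonalProjectionOnto (𝕜 := ℝ) (K.eqLocus (1 : Lp ℝ 2 ν →L[ℝ] Lp ℝ 2 ν))) x)
      rw [LinearMap.mem_eqLocus] at hm
      exact hm
    · rw [LinearMap.mem_eqLocus]
      simpa using hK1
  obtain ⟨q, hfix, hperp, hP⟩ := key
  -- `J` of Birkhoff averages is constantly `J x`
  have havg : ∀ N : ℕ, 1 ≤ N → J (birkhoffAverage ℝ (⇑K) _root_.id N x) = J x := by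
    intro N hN
    have hN0 : (N : ℝ) ≠ 0 := Nat.cast_ne_zero.2 (by omega)
    rw [birkhoffAverage, birkhoffSum, ContinuousLinearMap.map_smul, map_sum]
    have hsum : (∑ i ∈ Finset.range N, J (_root_.id ((⇑K)^[i] x))) = (N : ℝ) • J x := by
      rw [Finset.sum_congr rfl fun i _ => by simpa using hiter i x, Finset.sum_const,
        Finset.card_range]
      exact (Nat.cast_smul_eq_nsmul ℝ N (J x)).symm
    rw [hsum, smul_smul, inv_mul_cancel₀ hN0, one_smul]
  have hlim1 : Tendsto (fun N => J (birkhoffAverage ℝ (⇑K) _root_.id N x)) atTop (nhds (J q)) :=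
    (J.continuous.tendsto q).comp hP
  have hlim2 : Tendsto (fun N => J (birkhoffAverage ℝ (⇑K) _root_.id N x)) atTop (nhds (J x)) :=
    tendsto_const_nhds.congr' ((eventually_ge_atTop 1).mono fun N hN => (havg N hN).symm)
  have hJPx : J x = J q := tendsto_nhds_unique hlim2 hlim1
  -- `q` is a fixed vector of `K`, hence a.e. constant by ergodicity
  obtain ⟨c, hc⟩ := (hTte k hk).ae_eq_const_of_ae_eq_comp_ae (Lp.aestronglyMeasurable q)
    ((hfix ▸ hKae q).symm)
  have hPxc : q = c • oneL2 ν := by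
    refine Lp.ext ?_
    filter_upwards [hc, Lp.coeFn_smul c (oneL2 ν), honec] with y e1 e2 e3
    rw [e1, e2]
    simp [e3]
  -- inner product computations
  have hone : ⟪oneL2 ν, oneL2 ν⟫ = (1 : ℝ) := by
    have hae : ∀ᵐ y ∂ν, (inner ℝ ((oneL2 ν : X → ℝ) y) ((oneL2 ν : X → ℝ) y) : ℝ) = 1 :=
      honec.mono fun y hy => by simp [hy, RCLike.inner_apply]
    rw [L2.inner_def, integral_congr_ae hae, integral_const, probReal_univ]
    simp
  have hc1 : ⟪oneL2 ν, q⟫ = c := by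
    rw [hPxc, real_inner_smul_right, hone, mul_one]
  have hc2 : ⟪oneL2 ν, q⟫ = ⟪oneL2 ν, x⟫ := by
    rw [inner_sub_left, sub_eq_zero] at hperp
    have h1 : ⟪oneL2 ν, q⟫ = ⟪q, oneL2 ν⟫ := real_inner_comm _ _
    have h2 : ⟪oneL2 ν, x⟫ = ⟪x, oneL2 ν⟫ := real_inner_comm _ _
    rw [h1, h2]
    exact hperp.symm
  have hTx : Theta ν x = ⟪oneL2 ν, x⟫ • oneL2 ν := rfl
  calc J x = J q := hJPx
    _ = c • oneL2 ν := by rw [hPxc, ContinuousLinearMap.map_smul, hJ.map_one]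
    _ = Theta ν x := by rw [hTx, ← hc2, hc1]
end
end
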